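/- Let H = ∑_{i=1}^{N} (cᵢᵀx)^{dᵢ}·bᵢ over a field K of characteristic zero, with cⱼᵀbᵢ = 0 for all i ≥ j ≥ 1. Then the Jacobian matrix JH is nilpotent; more precisely, (JH)^{N+1} = 0 as a matrix over K[x]. -/

import Mathlib

open MvPolynomial Finset

lemma aux_nilp {R : Type*} [Ring R] (N : ℕ) (A : Fin N → R)
    (hA : ∀ i j : Fin N, i ≤ j → A i * A j = 0) :
    (∑ i, A i) ^ (N + 1) = 0 := by
  set S := ∑ i, A i with hS
  have key : ∀ m : ℕ, ∀ i : Fin N, N ≤ i.val + m → S ^ m * A i = 0 := by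
    intro m
    induction m with
    | zero => intro i hi; exact absurd hi (by have := i.isLt; omega)
    | succ m ih =>
      intro i hi
      have hSA : S * A i = ∑ j ∈ Finset.univ.filter (fun j => i < j), A j * A i := by
        rw [hS, Finset.sum_mul]
        refine (Finset.sum_filter_of_ne ?_).symm
        intro j _ hne
        by_contra h
        exact hne (hA j i (le_of_not_gt h))
      rw [pow_succ, mul_assoc, hSA, Finset.mul_sum]
      refine Finset.sum_eq_zero fun j hj => ?_
      rw [Finset.mem_filter] at hj
      rw [← mul_assoc, ih j (by have := hj.2; omega), zero_mul]
  rw [pow_succ, hS, Finset.mul_sum]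
  exact Finset.sum_eq_zero fun i _ => key N i (by omega)

theorem stmt6 (K : Type*) [Field K] [CharZero K] (n N : ℕ)
    (b c : Fin N → Fin n → K) (e : Fin N → ℕ)
    (horth : ∀ i j : Fin N, j ≤ i → ∑ t, c j t * b i t = 0)
    (H : Fin n → MvPolynomial (Fin n) K)
    (hH : ∀ p, H p = ∑ i, C (b i p) * (∑ t, C (c i t) * X t) ^ (e i))
    (M : Matrix (Fin n) (Fin n) (MvPolynomial (Fin n) K))
    (hM : M = Matrix.of fun p q => pderiv q (H p)) :
    M ^ (N + 1) = 0 ∧ IsNilpotent M := by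
  set L : Fin N → MvPolynomial (Fin n) K := fun i => ∑ t, C (c i t) * X t with hL
  set A : Fin N → Matrix (Fin n) (Fin n) (MvPolynomial (Fin n) K) :=
    fun i => Matrix.of fun p q => C (b i p) * ((e i : MvPolynomial (Fin n) K) * L i ^ (e i - 1)) * C (c i q) with hA
  have hpdL : ∀ i q, pderiv q (L i) = C (c i q) := by
    intro i q
    rw [hL]
    simp only [map_sum, pderiv_C_mul, pderiv_X]
    rw [Finset.sum_eq_single q]
    · simp
    · intro t _ ht; simp [Pi.single_eq_of_ne ht]
    · simp
  have hMA : M = ∑ i, A i := by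
    rw [hM]
    refine Matrix.ext fun p q => ?_
    simp only [Matrix.of_apply, hH, map_sum, pderiv_C_mul, pderiv_pow, hpdL,
      Matrix.sum_apply, hA]
    refine Finset.sum_congr rfl fun i _ => ?_
    rw [hL]
    have hpd := hpdL i q
    simp only [hL, map_sum, pderiv_C_mul] at hpd
    rw [hpd]
    ring
  have hAA : ∀ i j : Fin N, i ≤ j → A i * A j = 0 := by
    intro i j hij
    ext p q
    simp only [Matrix.mul_apply, hA, Matrix.of_apply, Matrix.zero_apply]
    have : ∀ t, C (b i p) * ((e i : MvPolynomial (Fin n) K) * L i ^ (e i - 1)) * C (c i t) *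
        (C (b j t) * ((e j : MvPolynomial (Fin n) K) * L j ^ (e j - 1)) * C (c j q)) =
        (C (b i p) * ((e i : MvPolynomial (Fin n) K) * L i ^ (e i - 1)) *
         ((e j : MvPolynomial (Fin n) K) * L j ^ (e j - 1)) * C (c j q)) * C (c i t * b j t) := by
      intro t; rw [map_mul]; ring
    simp only [this, ← Finset.mul_sum, ← map_sum, horth j i hij, map_zero, mul_zero]
  rw [hMA]
  refine ⟨aux_nilp N A hAA, N + 1, aux_nilp N A hAA⟩
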